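/- In the S-case setup, the sum s_{({a,b,c},{d,e})} + s_{({a,b},{c,d,e})} is even. -/

import Mathlib

namespace C2

open SimpleGraph

variable {V : Type*}

/-- `ψ` is the edge set of a spanning tree of `H`. -/
def IsSpanningTree (H : SimpleGraph V) (ψ : Set (Sym2 V)) : Prop :=
  ψ ⊆ H.edgeSet ∧ (fromEdgeSet ψ).Connected ∧ (fromEdgeSet ψ).IsAcyclic

/-- `φ` is a spanning 2-forest of `H` compatible with `(P₁, P₂)`. -/
def IsSpanning2Forest (H : SimpleGraph V) (P₁ P₂ : Set V) (φ : Set (Sym2 V)) : Prop :=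
  φ ⊆ H.edgeSet ∧ (fromEdgeSet φ).IsAcyclic ∧
    ∃ C₁ C₂ : (fromEdgeSet φ).ConnectedComponent, C₁ ≠ C₂ ∧
      (∀ C : (fromEdgeSet φ).ConnectedComponent, C = C₁ ∨ C = C₂) ∧
      (∀ u ∈ P₁, (fromEdgeSet φ).connectedComponentMk u = C₁) ∧
      (∀ u ∈ P₂, (fromEdgeSet φ).connectedComponentMk u = C₂)

/-- `(ψ, φ)` is an admissible pair of `H` for `(P₁, P₂)`. -/
def AdmissiblePair (H : SimpleGraph V) (P₁ P₂ : Set V) (ψ φ : Set (Sym2 V)) : Prop :=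
  Disjoint ψ φ ∧ ψ ∪ φ = H.edgeSet ∧ IsSpanningTree H ψ ∧ IsSpanning2Forest H P₁ P₂ φ

/-- The number of admissible pairs of `H` for `(P₁, P₂)`. -/
noncomputable def admissibleCount (H : SimpleGraph V) (P₁ P₂ : Set V) : ℕ :=
  Set.ncard {pr : Set (Sym2 V) × Set (Sym2 V) | AdmissiblePair H P₁ P₂ pr.1 pr.2}

/-- The Kirchhoff polynomial `Ψ_G = Σ_T Π_{e ∉ T} x_e`. -/
noncomputable def kirchhoff (G : SimpleGraph V) : MvPolynomial G.edgeSet ℤ :=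
  ∑ᶠ T ∈ {T : Set (Sym2 V) | IsSpanningTree G T},
    ∏ᶠ e ∈ {e : G.edgeSet | (e : Sym2 V) ∉ T}, MvPolynomial.X e

/-- `[Ψ_G]₂`, the number of points `x ∈ 𝔽₂^{E(G)}` with `Ψ_G(x) = 0`. -/
noncomputable def pointCount2 (G : SimpleGraph V) : ℕ :=
  Set.ncard {x : G.edgeSet → ZMod 2 |
    MvPolynomial.eval₂ (Int.castRingHom (ZMod 2)) x (kirchhoff G) = 0}

theorem mem_compl_pair {x v w : V} (h1 : x ≠ v) (h2 : x ≠ w) :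
    x ∈ ({v, w}ᶜ : Set V) := by
  simp [h1, h2]

section Aux

variable {W : Type*}

lemma eq_of_isolated_reachable {χ : Set (Sym2 W)} {z u : W} (hz : ∀ e ∈ χ, z ∉ e)
    (h : (fromEdgeSet χ).Reachable z u) : u = z := by
  obtain ⟨p⟩ := h
  cases p with
  | nil => rfl
  | cons h q =>
    rw [fromEdgeSet_adj] at h
    exact absurd (Sym2.mem_mk_left _ _) (hz _ h.1)

lemma reachable_delete {χ : Set (Sym2 W)} {z x : W}
    (hz : ∀ e ∈ χ, z ∈ e → e = s(z, x)) :
    ∀ (n : ℕ) {u v : W}, u ≠ z → v ≠ z → ∀ p : (fromEdgeSet χ).Walk u v, p.length ≤ n →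
      (fromEdgeSet (χ \ {s(z, x)})).Reachable u v := by
  intro n
  induction n using Nat.strong_induction_on with
  | _ n ih =>
    intro u v hu hv p hp
    cases p with
    | nil => exact Reachable.refl _
    | @cons _ b _ h q =>
      by_cases hb : b = z
      · have h' := h
        rw [fromEdgeSet_adj] at h'
        have he : s(u, b) = s(z, x) := hz _ h'.1 (by rw [hb]; exact Sym2.mem_mk_right _ _)
        rw [Sym2.eq_iff] at he
        have hux : u = x := by
          rcases he with ⟨h1, _⟩ | ⟨h1, _⟩
          · exact absurd h1 hu
          · exact h1
        cases q with
        | nil => exact absurd hb hv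
        | @cons _ b₂ _ h₂ r =>
          have h₂' := h₂
          rw [fromEdgeSet_adj] at h₂'
          have he₂ : s(b, b₂) = s(z, x) := hz _ h₂'.1 (by rw [hb]; exact Sym2.mem_mk_left _ _)
          rw [Sym2.eq_iff] at he₂
          have hbx : b₂ = x := by
            rcases he₂ with ⟨_, h2⟩ | ⟨_, h2⟩
            · exact h2
            · exact absurd (hb.trans h2.symm) h₂.ne
          have hb₂z : b₂ ≠ z := fun hh => h₂.ne' (by rw [hh, hb])
          have hlen : r.length < n := by
            simp only [SimpleGraph.Walk.length_cons] at hp; omega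
          have := ih r.length hlen hb₂z hv r le_rfl
          rw [hbx] at this
          rw [hux]
          exact this
      · have hadj : (fromEdgeSet (χ \ {s(z, x)})).Adj u b := by
          rw [fromEdgeSet_adj] at h ⊢
          refine ⟨⟨h.1, ?_⟩, h.2⟩
          intro hmem
          rw [Set.mem_singleton_iff] at hmem
          have : z ∈ s(u, b) := hmem ▸ Sym2.mem_mk_left _ _
          rw [Sym2.mem_iff] at this
          rcases this with h1 | h1
          · exact hu h1.symm
          · exact hb h1.symm
        have hlen : q.length < n := by
          simp only [SimpleGraph.Walk.length_cons] at hp; omega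
        exact hadj.reachable.trans (ih q.length hlen hb hv q le_rfl)

lemma reachable_delete' {χ : Set (Sym2 W)} {z x : W}
    (hz : ∀ e ∈ χ, z ∈ e → e = s(z, x)) {u v : W} (hu : u ≠ z) (hv : v ≠ z) :
    (fromEdgeSet χ).Reachable u v ↔ (fromEdgeSet (χ \ {s(z, x)})).Reachable u v := by
  constructor
  · rintro ⟨p⟩
    exact reachable_delete hz p.length hu hv p le_rfl
  · exact fun h => h.mono (fromEdgeSet_mono Set.diff_subset)

lemma sdiff_fromEdgeSet_eq (ρ : Set (Sym2 W)) (e : Sym2 W) :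
    fromEdgeSet ρ \ fromEdgeSet {e} = fromEdgeSet (ρ \ {e}) := by
  ext a b
  simp only [sdiff_adj, fromEdgeSet_adj, Set.mem_diff, Set.mem_singleton_iff]
  tauto

lemma acyclic_swap {ψ : Set (Sym2 W)} {z x y : W} (hzy : z ≠ y)
    (hz : ∀ e ∈ ψ, z ∈ e → e = s(z, x)) (hac : (fromEdgeSet ψ).IsAcyclic) :
    (fromEdgeSet ((ψ \ {s(z, x)}) ∪ {s(z, y)})).IsAcyclic := by
  set ρ := (ψ \ {s(z, x)}) ∪ {s(z, y)} with hρ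
  rw [isAcyclic_iff_forall_adj_isBridge]
  intro u v huv
  rw [isBridge_iff, deleteEdges, sdiff_fromEdgeSet_eq]
  refine ?_
  have huv' := huv
  rw [fromEdgeSet_adj] at huv'
  obtain ⟨hmem, hne⟩ := huv'
  by_cases hcase : s(u, v) = s(z, y)
  · have hρe : ρ \ {s(u, v)} ⊆ ψ \ {s(z, x)} := by
      rw [hρ, hcase]
      intro e he
      rcases he.1 with h1 | h1
      · exact h1
      · exact absurd h1 he.2
    have hiso : ∀ e ∈ ρ \ {s(u, v)}, z ∉ e := by
      intro e he hze
      have := hρe he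
      exact this.2 (hz e this.1 hze)
    rw [Sym2.eq_iff] at hcase
    intro hreach
    rcases hcase with ⟨h1, h2⟩ | ⟨h1, h2⟩
    · subst h1; subst h2
      exact hzy (eq_of_isolated_reachable hiso hreach).symm
    · subst h1; subst h2
      exact hzy (eq_of_isolated_reachable hiso hreach.symm).symm
  · have hmemψ : s(u, v) ∈ ψ \ {s(z, x)} := by
      rcases hmem with h1 | h1
      · exact h1
      · exact absurd h1 hcase
    have hzuv : z ∉ s(u, v) := fun hze => hmemψ.2 (hz _ hmemψ.1 hze)
    have huz : u ≠ z := fun hh => hzuv (hh ▸ Sym2.mem_mk_left _ _)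
    have hvz : v ≠ z := fun hh => hzuv (hh ▸ Sym2.mem_mk_right _ _)
    intro hreach
    have hz' : ∀ e ∈ ρ \ {s(u, v)}, z ∈ e → e = s(z, y) := by
      rintro e ⟨he, _⟩ hze
      rcases he with h1 | h1
      · exact absurd (hz e h1.1 hze) h1.2
      · exact h1
    have hreach2 := (reachable_delete' hz' huz hvz).mp hreach
    have hsub : (ρ \ {s(u, v)}) \ {s(z, y)} ⊆ ψ \ {s(u, v)} := by
      rintro e ⟨⟨he, hne'⟩, _⟩
      rcases he with h1 | h1
      · exact ⟨h1.1, hne'⟩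
      · exact absurd h1 (by assumption)
    have hreach3 := hreach2.mono (fromEdgeSet_mono hsub)
    have hbr := (isAcyclic_iff_forall_adj_isBridge.mp hac)
      (show (fromEdgeSet ψ).Adj u v by rw [fromEdgeSet_adj]; exact ⟨hmemψ.1, hne⟩)
    rw [isBridge_iff, deleteEdges, sdiff_fromEdgeSet_eq] at hbr
    exact hbr hreach3

lemma swap_main {H : SimpleGraph W} {z x y : W} {ψ φ : Set (Sym2 W)}
    (hzx : z ≠ x) (hzy : z ≠ y) (hxy : x ≠ y)
    (hf₁E : s(z, x) ∈ H.edgeSet) (hf₂E : s(z, y) ∈ H.edgeSet)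
    (hedge : ∀ e ∈ H.edgeSet, z ∈ e → e = s(z, x) ∨ e = s(z, y))
    (hd : Disjoint ψ φ) (hu : ψ ∪ φ = H.edgeSet)
    (hψ : IsSpanningTree H ψ)
    (hφsub : φ ⊆ H.edgeSet) (hφac : (fromEdgeSet φ).IsAcyclic)
    (hf₁ψ : s(z, x) ∈ ψ) (hf₂φ : s(z, y) ∈ φ) :
    Disjoint ((ψ \ {s(z, x)}) ∪ {s(z, y)}) ((φ \ {s(z, y)}) ∪ {s(z, x)}) ∧
    ((ψ \ {s(z, x)}) ∪ {s(z, y)}) ∪ ((φ \ {s(z, y)}) ∪ {s(z, x)}) = H.edgeSet ∧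
    IsSpanningTree H ((ψ \ {s(z, x)}) ∪ {s(z, y)}) ∧
    ((φ \ {s(z, y)}) ∪ {s(z, x)}) ⊆ H.edgeSet ∧
    (fromEdgeSet ((φ \ {s(z, y)}) ∪ {s(z, x)})).IsAcyclic ∧
    (∀ u v : W, u ≠ z → v ≠ z →
      ((fromEdgeSet ((φ \ {s(z, y)}) ∪ {s(z, x)})).Reachable u v ↔
        (fromEdgeSet φ).Reachable u v)) ∧
    (∀ u : W, u ≠ z →
      ((fromEdgeSet ((φ \ {s(z, y)}) ∪ {s(z, x)})).Reachable z u ↔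
        (fromEdgeSet φ).Reachable x u)) := by
  set f₁ := s(z, x) with hf₁
  set f₂ := s(z, y) with hf₂
  set ψ' := (ψ \ {f₁}) ∪ {f₂} with hψ'
  set φ' := (φ \ {f₂}) ∪ {f₁} with hφ'
  have hf₁f₂ : f₁ ≠ f₂ := by
    rw [hf₁, hf₂]; intro hh; exact hxy (Sym2.congr_right.mp hh)
  have hf₂ψ : f₂ ∉ ψ := fun hh => (Set.disjoint_left.mp hd hh) hf₂φ
  have hf₁φ : f₁ ∉ φ := fun hh => (Set.disjoint_left.mp hd hf₁ψ) hh
  have hψz : ∀ e ∈ ψ, z ∈ e → e = f₁ := by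
    intro e he hze
    rcases hedge e (hψ.1 he) hze with h | h
    · exact h
    · exact absurd (h ▸ he) hf₂ψ
  have hφz : ∀ e ∈ φ, z ∈ e → e = f₂ := by
    intro e he hze
    rcases hedge e (hφsub he) hze with h | h
    · exact absurd (h ▸ he) hf₁φ
    · exact h
  have hψ'z : ∀ e ∈ ψ', z ∈ e → e = f₂ := by
    rintro e (he | he) hze
    · exact absurd (hψz e he.1 hze) he.2
    · exact he
  have hφ'z : ∀ e ∈ φ', z ∈ e → e = f₁ := by
    rintro e (he | he) hze
    · exact absurd (hφz e he.1 hze) he.2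
    · exact he
  have hψ'd : ψ' \ {f₂} = ψ \ {f₁} := by
    ext e
    constructor
    · rintro ⟨h | h, h2⟩
      · exact h
      · exact absurd h h2
    · intro h
      exact ⟨Or.inl h, fun h2 => hf₂ψ (h2 ▸ h.1)⟩
  have hφ'd : φ' \ {f₁} = φ \ {f₂} := by
    ext e
    constructor
    · rintro ⟨h | h, h2⟩
      · exact h
      · exact absurd h h2
    · intro h
      exact ⟨Or.inl h, fun h2 => hf₁φ (h2 ▸ h.1)⟩
  have hψreach : ∀ u v : W, u ≠ z → v ≠ z →
      ((fromEdgeSet ψ').Reachable u v ↔ (fromEdgeSet ψ).Reachable u v) := by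
    intro u v huz hvz
    rw [reachable_delete' hψ'z huz hvz, reachable_delete' hψz huz hvz, hψ'd]
  have hφreach : ∀ u v : W, u ≠ z → v ≠ z →
      ((fromEdgeSet φ').Reachable u v ↔ (fromEdgeSet φ).Reachable u v) := by
    intro u v huz hvz
    rw [reachable_delete' hφ'z huz hvz, reachable_delete' hφz huz hvz, hφ'd]
  have hadjψ' : (fromEdgeSet ψ').Adj z y := by
    rw [fromEdgeSet_adj]
    exact ⟨Or.inr rfl, hzy⟩
  have hadjφ' : (fromEdgeSet φ').Adj z x := by
    rw [fromEdgeSet_adj]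
    exact ⟨Or.inr rfl, hzx⟩
  refine ⟨?_, ?_, ⟨?_, ?_, ?_⟩, ?_, ?_, hφreach, ?_⟩
  · rw [Set.disjoint_left]
    rintro e (he | he) (hf | hf)
    · exact Set.disjoint_left.mp hd he.1 hf.1
    · exact he.2 hf
    · exact hf.2 he
    · exact hf₁f₂ (hf.symm.trans he)
  · have : ψ' ∪ φ' = ψ ∪ φ := by
      ext e
      constructor
      · rintro ((h | h) | (h | h))
        · exact Or.inl h.1
        · exact Or.inr (h ▸ hf₂φ)
        · exact Or.inr h.1
        · exact Or.inl (h ▸ hf₁ψ)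
      · rintro (h | h)
        · by_cases hh : e = f₁
          · exact Or.inr (Or.inr hh)
          · exact Or.inl (Or.inl ⟨h, hh⟩)
        · by_cases hh : e = f₂
          · exact Or.inl (Or.inr hh)
          · exact Or.inr (Or.inl ⟨h, hh⟩)
    rw [this, hu]
  · rintro e (he | he)
    · exact hψ.1 he.1
    · exact he ▸ hf₂E
  · haveI hne : Nonempty W := hψ.2.1.nonempty
    refine ⟨fun u v => ?_⟩
    have hAll : ∀ u : W, u ≠ z → (fromEdgeSet ψ').Reachable y u := by
      intro u huz
      exact (hψreach y u (Ne.symm hzy) huz).mpr (hψ.2.1.preconnected y u)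
    by_cases huz : u = z
    · by_cases hvz : v = z
      · rw [huz, hvz]
      · rw [huz]; exact hadjψ'.reachable.trans (hAll v hvz)
    · by_cases hvz : v = z
      · rw [hvz]; exact (hadjψ'.reachable.trans (hAll u huz)).symm
      · exact (hAll u huz).symm.trans (hAll v hvz)
  · exact acyclic_swap hzy hψz hψ.2.2
  · rintro e (he | he)
    · exact hφsub he.1
    · exact he ▸ hf₁E
  · exact acyclic_swap hzx hφz hφac
  · intro u huz
    constructor
    · intro h
      exact (hφreach x u (Ne.symm hzx) huz).mp (hadjφ'.reachable.symm.trans h)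
    · intro h
      exact hadjφ'.reachable.trans ((hφreach x u (Ne.symm hzx) huz).mpr h)

lemma swap_admissible {H : SimpleGraph W} {z x y A B D E' : W} {ψ φ : Set (Sym2 W)}
    (hzx : z ≠ x) (hzy : z ≠ y) (hxy : x ≠ y)
    (hAz : A ≠ z) (hBz : B ≠ z) (hDz : D ≠ z) (hEz : E' ≠ z)
    (hf₁E : s(z, x) ∈ H.edgeSet) (hf₂E : s(z, y) ∈ H.edgeSet)
    (hedge : ∀ e ∈ H.edgeSet, z ∈ e → e = s(z, x) ∨ e = s(z, y))
    (hadm : AdmissiblePair H {A, B} {D, E'} ψ φ)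
    (hf₁ψ : s(z, x) ∈ ψ) (hf₂φ : s(z, y) ∈ φ) :
    AdmissiblePair H {A, B} {D, E'} ((ψ \ {s(z, x)}) ∪ {s(z, y)})
      ((φ \ {s(z, y)}) ∪ {s(z, x)}) := by
  obtain ⟨hd, hu, ht, hsub, hacφ, C₁, C₂, hneC, htot, h₁, h₂⟩ := hadm
  have compA : (fromEdgeSet φ).connectedComponentMk A = C₁ := h₁ A (by simp)
  have compB : (fromEdgeSet φ).connectedComponentMk B = C₁ := h₁ B (by simp)
  have compD : (fromEdgeSet φ).connectedComponentMk D = C₂ := h₂ D (by simp)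
  have compE : (fromEdgeSet φ).connectedComponentMk E' = C₂ := h₂ E' (by simp)
  have hAD : ¬ (fromEdgeSet φ).Reachable A D := by
    intro hr
    exact hneC (by rw [← compA, ← compD]; exact ConnectedComponent.sound hr)
  have htotAD : ∀ u : W, (fromEdgeSet φ).Reachable u A ∨ (fromEdgeSet φ).Reachable u D := by
    intro u
    rcases htot ((fromEdgeSet φ).connectedComponentMk u) with h | h
    · exact Or.inl (ConnectedComponent.eq.mp (h.trans compA.symm))
    · exact Or.inr (ConnectedComponent.eq.mp (h.trans compD.symm))
  have hBA : (fromEdgeSet φ).Reachable B A :=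
    ConnectedComponent.eq.mp (compB.trans compA.symm)
  have hED : (fromEdgeSet φ).Reachable E' D :=
    ConnectedComponent.eq.mp (compE.trans compD.symm)
  obtain ⟨hd', hu', ht', hsub', hac', hiff, hziff⟩ :=
    swap_main hzx hzy hxy hf₁E hf₂E hedge hd hu ht hsub hacφ hf₁ψ hf₂φ
  set φ' := (φ \ {s(z, y)}) ∪ {s(z, x)} with hφ'
  refine ⟨hd', hu', ht', hsub', hac', (fromEdgeSet φ').connectedComponentMk A,
    (fromEdgeSet φ').connectedComponentMk D, ?_, ?_, ?_, ?_⟩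
  · intro h
    exact hAD ((hiff A D hAz hDz).mp (ConnectedComponent.eq.mp h))
  · intro Cc
    induction Cc using ConnectedComponent.ind with
    | _ u =>
      by_cases huz : u = z
      · rcases htotAD x with h | h
        · exact Or.inl (ConnectedComponent.sound (by
            rw [huz]; exact ((hziff A hAz).mpr h)))
        · exact Or.inr (ConnectedComponent.sound (by
            rw [huz]; exact ((hziff D hDz).mpr h)))
      · rcases htotAD u with h | h
        · exact Or.inl (ConnectedComponent.sound ((hiff u A huz hAz).mpr h))
        · exact Or.inr (ConnectedComponent.sound ((hiff u D huz hDz).mpr h))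
  · intro u hu'
    rcases hu' with h | h
    · rw [h]
    · rw [Set.mem_singleton_iff] at h
      rw [h]
      exact ConnectedComponent.sound ((hiff B A hBz hAz).mpr hBA)
  · intro u hu'
    rcases hu' with h | h
    · rw [h]
    · rw [Set.mem_singleton_iff] at h
      rw [h]
      exact ConnectedComponent.sound ((hiff E' D hEz hDz).mpr hED)

lemma symmDiff_pair {α : Type*} {s : Set α} {e f : α} (he : e ∈ s) (hf : f ∉ s) :
    symmDiff s {e, f} = (s \ {e}) ∪ {f} := by
  ext g
  simp only [Set.mem_symmDiff, Set.mem_insert_iff, Set.mem_singleton_iff, Set.mem_union,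
    Set.mem_diff]
  constructor
  · rintro (⟨h1, h2⟩ | ⟨h3 | h3, h4⟩)
    · exact Or.inl ⟨h1, fun hh => h2 (Or.inl hh)⟩
    · exact absurd (h3 ▸ he) h4
    · exact Or.inr h3
  · rintro (⟨h1, h2⟩ | h3)
    · refine Or.inl ⟨h1, ?_⟩
      rintro (hh | hh)
      · exact h2 hh
      · exact hf (hh ▸ h1)
    · exact Or.inr ⟨Or.inr h3, fun hgs => hf (h3 ▸ hgs)⟩

lemma forest_mono {H : SimpleGraph W} {P₁ P₁' P₂ P₂' : Set W} {φ : Set (Sym2 W)}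
    (h₁ : P₁' ⊆ P₁) (h₂ : P₂' ⊆ P₂) (h : IsSpanning2Forest H P₁ P₂ φ) :
    IsSpanning2Forest H P₁' P₂' φ := by
  obtain ⟨hsub, hac, C₁, C₂, hne, htot, g₁, g₂⟩ := h
  exact ⟨hsub, hac, C₁, C₂, hne, htot, fun u hu => g₁ u (h₁ hu), fun u hu => g₂ u (h₂ hu)⟩

lemma even_ncard_of_involution {α : Type*} {s : Set α} (hs : s.Finite)
    (σ : α → α) (hmem : ∀ a ∈ s, σ a ∈ s) (hinv : ∀ a ∈ s, σ (σ a) = a)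
    (hne : ∀ a ∈ s, σ a ≠ a) : Even s.ncard := by
  classical
  rw [Set.ncard_eq_toFinset_card _ hs]
  rw [even_iff_two_dvd, ← ZMod.natCast_eq_zero_iff]
  have : ((hs.toFinset.card : ZMod 2)) = ∑ _a ∈ hs.toFinset, (1 : ZMod 2) := by
    simp
  rw [this]
  refine Finset.sum_involution (fun a _ => σ a) (fun a ha => by decide) ?_ ?_ ?_
  · intro a ha _
    exact hne a (by simpa using ha)
  · intro a ha
    simp only [Set.Finite.mem_toFinset] at ha ⊢
    exact hmem a ha
  · intro a ha
    exact hinv a (by simpa using ha)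

end Aux

/-- S-case, swapping around `c`: in the S-case setup,
`s_{({a,b,c},{d,e})} + s_{({a,b},{c,d,e})}` is even. -/
theorem scase_swap_c_parity {V : Type*} [Fintype V]
    (G : SimpleGraph V) (hconn : G.Connected)
    (hreg : ∀ x : V, (G.neighborSet x).ncard = 4)
    (v w a b c d e : V) (hvw : G.Adj v w)
    (hab : a ≠ b) (hac : a ≠ c) (had : a ≠ d) (hae : a ≠ e)
    (hbc : b ≠ c) (hbd : b ≠ d) (hbe : b ≠ e)
    (hcd : c ≠ d) (hce : c ≠ e) (hde : d ≠ e)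
    (hav : a ≠ v) (haw : a ≠ w) (hbv : b ≠ v) (hbw : b ≠ w)
    (hcv : c ≠ v) (hcw : c ≠ w) (hdv : d ≠ v) (hdw : d ≠ w)
    (hev : e ≠ v) (hew : e ≠ w)
    (hNw : G.neighborSet w = {a, b, c, v}) (hNv : G.neighborSet v = {c, d, e, w}) :
    let S := G.induce ({v, w}ᶜ : Set V)
    let A : ↥({v, w}ᶜ : Set V) := ⟨a, mem_compl_pair hav haw⟩
    let B : ↥({v, w}ᶜ : Set V) := ⟨b, mem_compl_pair hbv hbw⟩
    let C : ↥({v, w}ᶜ : Set V) := ⟨c, mem_compl_pair hcv hcw⟩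
    let D : ↥({v, w}ᶜ : Set V) := ⟨d, mem_compl_pair hdv hdw⟩
    let E : ↥({v, w}ᶜ : Set V) := ⟨e, mem_compl_pair hev hew⟩
    Even (admissibleCount S {A, B, C} {D, E} + admissibleCount S {A, B} {C, D, E}) := by
  intro S A B C D E
  classical
  -- the two neighbours of c other than v and w
  have hvc : G.Adj v c := by
    have : c ∈ G.neighborSet v := by rw [hNv]; simp
    exact this
  have hwc : G.Adj w c := by
    have : c ∈ G.neighborSet w := by rw [hNw]; simp
    exact this
  have hsubN : ({v, w} : Set V) ⊆ G.neighborSet c := by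
    intro u hu
    rcases hu with h | h
    · rw [h]; exact hvc.symm
    · rw [Set.mem_singleton_iff] at h; rw [h]; exact hwc.symm
  have hT : ((G.neighborSet c) \ {v, w}).ncard = 2 := by
    rw [Set.ncard_diff hsubN (Set.toFinite _), hreg c, Set.ncard_pair hvw.ne]
  obtain ⟨x, y, hxy, hTxy⟩ := Set.ncard_eq_two.mp hT
  have hxmem : x ∈ G.neighborSet c \ {v, w} := by rw [hTxy]; exact Or.inl rfl
  have hymem : y ∈ G.neighborSet c \ {v, w} := by rw [hTxy]; exact Or.inr rfl
  have hcx : G.Adj c x := hxmem.1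
  have hcy : G.Adj c y := hymem.1
  have hxv : x ≠ v := fun h => hxmem.2 (Or.inl h)
  have hxw : x ≠ w := fun h => hxmem.2 (Or.inr h)
  have hyv : y ≠ v := fun h => hymem.2 (Or.inl h)
  have hyw : y ≠ w := fun h => hymem.2 (Or.inr h)
  set X : ↥({v, w}ᶜ : Set V) := ⟨x, mem_compl_pair hxv hxw⟩ with hX
  set Y : ↥({v, w}ᶜ : Set V) := ⟨y, mem_compl_pair hyv hyw⟩ with hY
  have hCA : A ≠ C := fun h => hac (congrArg Subtype.val h)
  have hCB : B ≠ C := fun h => hbc (congrArg Subtype.val h)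
  have hCD : D ≠ C := fun h => hcd (congrArg Subtype.val h).symm
  have hCE : E ≠ C := fun h => hce (congrArg Subtype.val h).symm
  have hCX : C ≠ X := fun h => hcx.ne (congrArg Subtype.val h)
  have hCY : C ≠ Y := fun h => hcy.ne (congrArg Subtype.val h)
  have hXY : X ≠ Y := fun h => hxy (congrArg Subtype.val h)
  have hSCX : S.Adj C X := hcx
  have hSCY : S.Adj C Y := hcy
  have hf₁E : s(C, X) ∈ S.edgeSet := hSCX
  have hf₂E : s(C, Y) ∈ S.edgeSet := hSCY
  have key : ∀ q : ↥({v, w}ᶜ : Set V), S.Adj C q → q = X ∨ q = Y := by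
    intro q hq
    have hGq : G.Adj c q.val := hq
    have hqmem : (q : V) ∈ G.neighborSet c \ {v, w} := by
      refine ⟨hGq, ?_⟩
      have h2 := q.2
      simp only [Set.mem_compl_iff, Set.mem_insert_iff, Set.mem_singleton_iff] at h2 ⊢
      exact h2
    rw [hTxy] at hqmem
    rcases hqmem with h | h
    · exact Or.inl (Subtype.ext h)
    · exact Or.inr (Subtype.ext (by simpa using h))
  have hedge : ∀ e' ∈ S.edgeSet, C ∈ e' → e' = s(C, X) ∨ e' = s(C, Y) := by
    intro e' he' hce'
    induction e' using Sym2.ind with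
    | _ p q =>
      rw [Sym2.mem_iff] at hce'
      rw [mem_edgeSet] at he'
      rcases hce' with h | h
      · rcases key q (h ▸ he') with h2 | h2
        · left; rw [h, h2]
        · right; rw [h, h2]
      · rcases key p ((h ▸ he').symm) with h2 | h2
        · left; rw [h, h2]; exact Sym2.eq_swap
        · right; rw [h, h2]; exact Sym2.eq_swap
  set F : Set (Sym2 ↥({v, w}ᶜ : Set V)) := {s(C, X), s(C, Y)} with hF
  set U₁ := {pr : Set (Sym2 ↥({v, w}ᶜ : Set V)) × Set (Sym2 ↥({v, w}ᶜ : Set V)) |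
    AdmissiblePair S {A, B, C} {D, E} pr.1 pr.2} with hU₁
  set U₂ := {pr : Set (Sym2 ↥({v, w}ᶜ : Set V)) × Set (Sym2 ↥({v, w}ᶜ : Set V)) |
    AdmissiblePair S {A, B} {C, D, E} pr.1 pr.2} with hU₂
  set U := {pr : Set (Sym2 ↥({v, w}ᶜ : Set V)) × Set (Sym2 ↥({v, w}ᶜ : Set V)) |
    AdmissiblePair S {A, B} {D, E} pr.1 pr.2} with hU
  have hUnion : U₁ ∪ U₂ = U := by
    apply Set.Subset.antisymm
    · rintro ⟨ψ, φ⟩ (hpr | hpr)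
      · obtain ⟨hd, hu, ht, hforest⟩ := hpr
        refine ⟨hd, hu, ht, forest_mono ?_ Set.Subset.rfl hforest⟩
        intro u hu'
        rcases hu' with h | h
        · exact Or.inl h
        · exact Or.inr (Or.inl h)
      · obtain ⟨hd, hu, ht, hforest⟩ := hpr
        refine ⟨hd, hu, ht, forest_mono Set.Subset.rfl ?_ hforest⟩
        intro u hu'
        rcases hu' with h | h
        · exact Or.inr (Or.inl h)
        · exact Or.inr (Or.inr h)
    · rintro ⟨ψ, φ⟩ ⟨hd, hu, ht, hsub, hacφ, C₁, C₂, hneC, htot, h₁, h₂⟩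
      rcases htot ((fromEdgeSet φ).connectedComponentMk C) with h | h
      · left
        refine ⟨hd, hu, ht, hsub, hacφ, C₁, C₂, hneC, htot, ?_, h₂⟩
        intro u hu'
        simp only [Set.mem_insert_iff, Set.mem_singleton_iff] at hu'
        rcases hu' with rfl | rfl | rfl
        · exact h₁ _ (by simp)
        · exact h₁ _ (by simp)
        · exact h
      · right
        refine ⟨hd, hu, ht, hsub, hacφ, C₁, C₂, hneC, htot, h₁, ?_⟩
        intro u hu'
        simp only [Set.mem_insert_iff, Set.mem_singleton_iff] at hu'
        rcases hu' with rfl | rfl | rfl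
        · exact h
        · exact h₂ _ (by simp)
        · exact h₂ _ (by simp)
  have hdisj : Disjoint U₁ U₂ := by
    rw [Set.disjoint_left]
    rintro ⟨ψ, φ⟩ h1 h2
    obtain ⟨_, _, _, _, _, C₁, C₂, hneC, _, g₁, g₂⟩ := h1
    obtain ⟨_, _, _, _, _, C₁', C₂', _, _, g₁', g₂'⟩ := h2
    have e1 : (fromEdgeSet φ).connectedComponentMk C = C₁ := g₁ C (by simp)
    have e2 : (fromEdgeSet φ).connectedComponentMk D = C₂ := g₂ D (by simp)
    have e3 : (fromEdgeSet φ).connectedComponentMk C = C₂' := g₂' C (by simp)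
    have e4 : (fromEdgeSet φ).connectedComponentMk D = C₂' := g₂' D (by simp)
    exact hneC (e1.symm.trans ((e3.trans e4.symm).trans e2))
  show Even (U₁.ncard + U₂.ncard)
  rw [← Set.ncard_union_eq hdisj (Set.toFinite _) (Set.toFinite _), hUnion]
  refine even_ncard_of_involution (Set.toFinite _)
    (fun pr => (symmDiff pr.1 F, symmDiff pr.2 F)) ?_ ?_ ?_
  · -- maps U to U
    rintro ⟨ψ, φ⟩ hpr
    have hd := hpr.1
    have huE := hpr.2.1
    have ht := hpr.2.2.1
    obtain ⟨hsub, hacφ, C₁, C₂, hneC, htot, h₁, h₂⟩ := hpr.2.2.2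
    have honeψ : s(C, X) ∈ ψ ∨ s(C, Y) ∈ ψ := by
      by_contra hcon
      push_neg at hcon
      have hiso : ∀ e' ∈ ψ, C ∉ e' := by
        intro e' he' hCe
        rcases hedge e' (ht.1 he') hCe with h | h
        · exact hcon.1 (h ▸ he')
        · exact hcon.2 (h ▸ he')
      exact hCA (eq_of_isolated_reachable hiso (ht.2.1.preconnected C A))
    have hnboth : ¬(s(C, X) ∈ ψ ∧ s(C, Y) ∈ ψ) := by
      rintro ⟨hx1, hy1⟩
      have hiso : ∀ e' ∈ φ, C ∉ e' := by
        intro e' he' hCe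
        rcases hedge e' (hsub he') hCe with h | h
        · exact Set.disjoint_left.mp hd (h ▸ hx1) he'
        · exact Set.disjoint_left.mp hd (h ▸ hy1) he'
      rcases htot ((fromEdgeSet φ).connectedComponentMk C) with h | h
      · have hr : (fromEdgeSet φ).Reachable C A :=
          ConnectedComponent.eq.mp (h.trans (h₁ A (by simp)).symm)
        exact hCA (eq_of_isolated_reachable hiso hr)
      · have hr : (fromEdgeSet φ).Reachable C D :=
          ConnectedComponent.eq.mp (h.trans (h₂ D (by simp)).symm)
        exact hCD (eq_of_isolated_reachable hiso hr)
    have hadm : AdmissiblePair S {A, B} {D, E} ψ φ :=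
      ⟨hd, huE, ht, hsub, hacφ, C₁, C₂, hneC, htot, h₁, h₂⟩
    rcases honeψ with hx1 | hy1
    · have hy2 : s(C, Y) ∈ φ := by
        have hm : s(C, Y) ∈ ψ ∪ φ := huE ▸ hf₂E
        rcases hm with h | h
        · exact absurd ⟨hx1, h⟩ hnboth
        · exact h
      have hy1' : s(C, Y) ∉ ψ := fun hh => Set.disjoint_left.mp hd hh hy2
      have hx2' : s(C, X) ∉ φ := fun hh => Set.disjoint_left.mp hd hx1 hh
      have e1 : symmDiff ψ F = (ψ \ {s(C, X)}) ∪ {s(C, Y)} := symmDiff_pair hx1 hy1'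
      have e2 : symmDiff φ F = (φ \ {s(C, Y)}) ∪ {s(C, X)} := by
        rw [hF, Set.pair_comm (s(C, X)) (s(C, Y))]
        exact symmDiff_pair hy2 hx2'
      show AdmissiblePair S {A, B} {D, E} (symmDiff ψ F) (symmDiff φ F)
      rw [e1, e2]
      exact swap_admissible hCX hCY hXY hCA hCB hCD hCE hf₁E hf₂E hedge hadm hx1 hy2
    · have hx2 : s(C, X) ∈ φ := by
        have hm : s(C, X) ∈ ψ ∪ φ := huE ▸ hf₁E
        rcases hm with h | h
        · exact absurd ⟨h, hy1⟩ hnboth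
        · exact h
      have hx1' : s(C, X) ∉ ψ := fun hh => Set.disjoint_left.mp hd hh hx2
      have hy2' : s(C, Y) ∉ φ := fun hh => Set.disjoint_left.mp hd hy1 hh
      have e1 : symmDiff ψ F = (ψ \ {s(C, Y)}) ∪ {s(C, X)} := by
        rw [hF, Set.pair_comm (s(C, X)) (s(C, Y))]
        exact symmDiff_pair hy1 hx1'
      have e2 : symmDiff φ F = (φ \ {s(C, X)}) ∪ {s(C, Y)} := symmDiff_pair hx2 hy2'
      show AdmissiblePair S {A, B} {D, E} (symmDiff ψ F) (symmDiff φ F)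
      rw [e1, e2]
      exact swap_admissible hCY hCX hXY.symm hCA hCB hCD hCE hf₂E hf₁E
        (fun e' he' hce' => (hedge e' he' hce').symm) hadm hy1 hx2
  · -- involution
    rintro ⟨ψ, φ⟩ _
    simp [symmDiff_symmDiff_cancel_right]
  · -- no fixed points
    rintro ⟨ψ, φ⟩ _ h
    have h1 : symmDiff ψ F = ψ := congrArg Prod.fst h
    rw [symmDiff_eq_left] at h1
    have : s(C, X) ∈ F := Or.inl rfl
    rw [h1] at this
    exact this

end C2
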